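/- Let k ≥ 2 and m ≥ 1 be integers with 2·k^m ≥ (k+1)^m. If positive integers a_1, ..., a_k all lie in {1, 2, ..., (k+1)^m − 1} and satisfy a_1^(-1/m) + ... + a_k^(-1/m) = 1 (as real numbers), then a_1 = a_2 = ... = a_k = k^m. -/

import Mathlib

open Polynomial IntermediateField


lemma minpoly_structure {β : ℝ} {m : ℕ} (hm : m ≠ 0) (hβ : 0 < β)
    {q : ℚ} (hq : β ^ m = (q : ℝ)) :
    (∃ r : ℚ, β = (r : ℝ)) ∨ (minpoly ℚ β).nextCoeff = 0 := by
  have hq0 : 0 ≤ (q : ℝ) := hq ▸ (pow_pos hβ m).le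
  have hint : IsIntegral ℚ β := by
    refine ⟨X ^ m - C q, (monic_X_pow_sub_C q hm), ?_⟩
    simp [eval₂, hq]
  set p := minpoly ℚ β with hp
  have pmonic : p.Monic := minpoly.monic hint
  have pne : p ≠ 0 := pmonic.ne_zero
  have hdvd : p ∣ X ^ m - C q := by
    apply minpoly.dvd
    simp [hq]
  set d := p.natDegree with hd
  have hdpos : 0 < d := minpoly.natDegree_pos hint
  -- complex roots
  have hsplits : Splits (p.map (algebraMap ℚ ℂ)) := IsAlgClosed.splits _
  set P := p.map (algebraMap ℚ ℂ) with hP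
  have Pmonic : P.Monic := pmonic.map _
  have hroots : ∀ z ∈ P.roots, (normHom : ℂ →*₀ ℝ) z = β := by
    intro z hz
    have hz' : z ^ m = (q : ℂ) := by
      have hmap : (X ^ m - C q).map (algebraMap ℚ ℂ) = X ^ m - C (q : ℂ) := by simp
      have hzr : eval z ((X ^ m - C q).map (algebraMap ℚ ℂ)) = 0 := by
        obtain ⟨v, hv⟩ := Polynomial.map_dvd (algebraMap ℚ ℂ) hdvd
        rw [hv, eval_mul, (isRoot_of_mem_roots hz : eval z P = 0), zero_mul]
      rw [hmap] at hzr
      simpa [sub_eq_zero] using hzr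
    have habs : ((normHom : ℂ →*₀ ℝ) z) ^ m = β ^ m := by
      have h1 : ((q : ℚ) : ℂ) = (((q : ℝ)) : ℂ) := by norm_cast
      rw [← map_pow, hz', h1, normHom_apply, Complex.norm_real, Real.norm_eq_abs, abs_of_nonneg hq0, hq]
    exact (pow_left_inj₀ (norm_nonneg z) hβ.le hm).mp habs
  have hcard : P.roots.card = d := by
    rw [← hsplits.natDegree_eq_card_roots, hP, natDegree_map]
  -- constant coefficient
  have hprod : P = (P.roots.map fun a => X - C a).prod :=
    hsplits.eq_prod_roots_of_monic Pmonic
  have habs0 : (normHom : ℂ →*₀ ℝ) (P.coeff 0) = β ^ d := by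
    conv_lhs => rw [coeff_zero_eq_eval_zero, hprod, eval_multiset_prod]
    rw [map_multiset_prod, Multiset.map_map, Multiset.map_map]
    have : Multiset.map ((⇑(normHom : ℂ →*₀ ℝ) ∘ eval 0) ∘ fun a => X - C a) P.roots
        = Multiset.map (fun _ => β) P.roots :=
      Multiset.map_congr rfl (fun z hz => by simpa using hroots z hz)
    rw [this, Multiset.map_const', Multiset.prod_replicate, hcard]
  -- β ^ d is rational
  set c : ℚ := |p.coeff 0| with hc
  have hbd : β ^ d = (c : ℝ) := by
    have h2 : P.coeff 0 = ((p.coeff 0 : ℚ) : ℂ) := by simp [hP, coeff_map]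
    rw [← habs0, h2]
    have : ((p.coeff 0 : ℚ) : ℂ) = (((p.coeff 0 : ℝ)) : ℂ) := by norm_cast
    rw [this, normHom_apply, Complex.norm_real, Real.norm_eq_abs, hc, Rat.cast_abs]
  by_cases hd1 : d = 1
  · left
    exact ⟨c, by rw [← pow_one β, ← hd1, hbd]⟩
  · right
    have hd2 : 2 ≤ d := by omega
    have hroot : (Polynomial.aeval β) (X ^ d - C c) = 0 := by simp [hbd]
    have hdvd2 : p ∣ X ^ d - C c := minpoly.dvd ℚ β hroot
    have hmon2 : (X ^ d - C c : ℚ[X]).Monic := monic_X_pow_sub_C c (by omega)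
    have hdeg : (X ^ d - C c : ℚ[X]).natDegree = d := natDegree_X_pow_sub_C
    have hpeq : p = X ^ d - C c :=
      eq_of_monic_of_associated pmonic hmon2
        (associated_of_dvd_of_natDegree_le hdvd2 hmon2.ne_zero (by rw [hdeg]))
    have hnc : p.nextCoeff = p.coeff (d - 1) := nextCoeff_of_natDegree_pos hdpos
    rw [hnc, hpeq, coeff_sub, coeff_X_pow, coeff_C,
      if_neg (by omega : ¬ (d - 1 = d)), if_neg (by omega : ¬ (d - 1 = 0)), sub_zero]

lemma trace_eq_zero_of_nextCoeff {F K : Type*} [Field F] [Field K] [Algebra F K]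
    [FiniteDimensional F K]
    (x : K) (h : (minpoly F x).nextCoeff = 0) : Algebra.trace F K x = 0 := by
  have hxint : IsIntegral F x := IsIntegral.of_finite F x
  haveI : FiniteDimensional F F⟮x⟯ := IntermediateField.adjoin.finiteDimensional hxint
  haveI : FiniteDimensional F⟮x⟯ K := FiniteDimensional.right F F⟮x⟯ K
  have h1 : Algebra.trace F K x =
      Algebra.trace F F⟮x⟯ (Algebra.trace F⟮x⟯ K x) := (Algebra.trace_trace _).symm
  have h2 : x = algebraMap F⟮x⟯ K (AdjoinSimple.gen F x) :=
    (AdjoinSimple.algebraMap_gen F x).symm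
  have h3 : Algebra.trace F F⟮x⟯ (AdjoinSimple.gen F x) = 0 := by
    have := (IntermediateField.adjoin.powerBasis hxint).trace_gen_eq_nextCoeff_minpoly
    rw [show (IntermediateField.adjoin.powerBasis hxint).gen = AdjoinSimple.gen F x from rfl]
      at this
    rw [this, IntermediateField.minpoly_gen, h, neg_zero]
  have h4 := congrArg (Algebra.trace F⟮x⟯ K) h2
  rw [Algebra.trace_algebraMap] at h4
  rw [h1, h4, map_nsmul, h3, smul_zero]

lemma all_rational_of_sum_rational {k m : ℕ} (hm : m ≠ 0) (β : Fin k → ℝ)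
    (hpos : ∀ i, 0 < β i) (q : Fin k → ℚ) (hq : ∀ i, β i ^ m = (q i : ℝ))
    (hsum : ∑ i, β i = 1) : ∀ i, ∃ r : ℚ, β i = (r : ℝ) := by
  classical
  have hint : ∀ i, IsIntegral ℚ (β i) := by
    intro i
    exact ⟨X ^ m - C (q i), monic_X_pow_sub_C _ hm, by simp [eval₂, hq i]⟩
  set K : IntermediateField ℚ ℝ := IntermediateField.adjoin ℚ (Set.range β) with hK
  haveI : Finite (Set.range β) := Set.finite_range β
  haveI : FiniteDimensional ℚ K := IntermediateField.finiteDimensional_adjoin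
    (fun x hx => by obtain ⟨i, rfl⟩ := hx; exact hint i)
  set b : Fin k → K := fun i => ⟨β i, IntermediateField.subset_adjoin ℚ _ ⟨i, rfl⟩⟩ with hb
  have hsumK : ∑ i, b i = 1 := by
    apply Subtype.ext
    push_cast
    exact hsum
  -- trace of each b i
  have htr : ∀ i, (¬ ∃ r : ℚ, β i = (r : ℝ)) → Algebra.trace ℚ K (b i) = 0 := by
    intro i hirr
    have hnc : (minpoly ℚ (β i)).nextCoeff = 0 :=
      (minpoly_structure hm (hpos i) (hq i)).resolve_left hirr
    have hmp : minpoly ℚ (b i) = minpoly ℚ (β i) := by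
      have h' := (minpoly.algebraMap_eq (A := ℚ) (algebraMap K ℝ).injective (b i)).symm
      rwa [show (algebraMap K ℝ) (b i) = β i from rfl] at h'
    exact trace_eq_zero_of_nextCoeff (b i) (by rw [hmp, hnc])
  -- rational values
  set r : Fin k → ℚ := fun i => if h : ∃ s : ℚ, β i = (s : ℝ) then h.choose else 0 with hr
  set R : Finset (Fin k) := Finset.univ.filter (fun i => ∃ s : ℚ, β i = (s : ℝ)) with hR
  have hrR : ∀ i ∈ R, β i = (r i : ℝ) := by
    intro i hi
    rw [hR, Finset.mem_filter] at hi
    rw [hr]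
    simp only [dif_pos hi.2]
    exact hi.2.choose_spec
  have htrace_sum : (Module.finrank ℚ K : ℚ) = Module.finrank ℚ K • ∑ i ∈ R, r i := by
    have h0 : Algebra.trace ℚ K 1 = (Module.finrank ℚ K : ℚ) := by
      simpa using Algebra.trace_algebraMap (R := ℚ) (S := K) (1 : ℚ)
    calc (Module.finrank ℚ K : ℚ) = Algebra.trace ℚ K (∑ i, b i) := by rw [hsumK, h0]
      _ = ∑ i, Algebra.trace ℚ K (b i) := map_sum _ _ _
      _ = ∑ i ∈ R, Algebra.trace ℚ K (b i) := by
          refine (Finset.sum_subset (Finset.subset_univ R) ?_).symm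
          intro i _ hiR
          apply htr
          intro hrat
          exact hiR (by rw [hR]; simp [hrat])
      _ = ∑ i ∈ R, Module.finrank ℚ K • r i := by
          refine Finset.sum_congr rfl (fun i hi => ?_)
          have : b i = algebraMap ℚ K (r i) := by
            apply Subtype.ext
            simpa using hrR i hi
          rw [this, Algebra.trace_algebraMap]
      _ = Module.finrank ℚ K • ∑ i ∈ R, r i := (Finset.smul_sum).symm
  have hfr : 0 < Module.finrank ℚ K := Module.finrank_pos
  have hsumR : ∑ i ∈ R, r i = 1 := by
    have hn : ((Module.finrank ℚ K : ℚ)) ≠ 0 := by exact_mod_cast hfr.ne'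
    have h' := htrace_sum
    rw [nsmul_eq_mul] at h'
    have h'' : (Module.finrank ℚ K : ℚ) * 1 = (Module.finrank ℚ K : ℚ) * ∑ i ∈ R, r i := by
      rw [mul_one]; exact h'
    exact (mul_left_cancel₀ hn h'').symm
  -- conclude
  intro i
  by_contra hirr
  have hiR : i ∉ R := by rw [hR]; simp only [Finset.mem_filter]; tauto
  have hlt : ∑ j ∈ R, β j < ∑ j, β j := by
    refine Finset.sum_lt_sum_of_subset (Finset.subset_univ R) (Finset.mem_univ i) hiR (hpos i)
      (fun j _ _ => (hpos j).le)
  rw [hsum] at hlt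
  have : ∑ j ∈ R, β j = 1 := by
    rw [show ∑ j ∈ R, β j = ∑ j ∈ R, ((r j : ℝ)) from Finset.sum_congr rfl hrR]
    rw [← Rat.cast_sum, hsumR, Rat.cast_one]
  rw [this] at hlt
  exact lt_irrefl _ hlt

theorem unique_solution_reciprocal_roots (k m : ℕ) (hk : 2 ≤ k) (hm : 1 ≤ m)
    (hkm : (k + 1) ^ m ≤ 2 * k ^ m)
    (a : Fin k → ℕ) (ha : ∀ i, 1 ≤ a i ∧ a i ≤ (k + 1) ^ m - 1)
    (heq : ∑ i, (((a i : ℝ)) ^ ((1 : ℝ) / m))⁻¹ = 1) :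
    ∀ i, a i = k ^ m := by
  have hm0 : m ≠ 0 := by omega
  have hmR : (m : ℝ) ≠ 0 := by exact_mod_cast hm0
  set β : Fin k → ℝ := fun i => (((a i : ℝ)) ^ ((1 : ℝ) / m))⁻¹ with hβ
  have hapos : ∀ i, 0 < (a i : ℝ) := fun i => by exact_mod_cast (ha i).1
  have hpos : ∀ i, 0 < β i := fun i =>
    inv_pos.mpr (Real.rpow_pos_of_pos (hapos i) _)
  have hqm : ∀ i, β i ^ m = (((a i : ℚ)⁻¹ : ℚ) : ℝ) := by
    intro i
    have h1 : (((a i : ℝ)) ^ ((1 : ℝ) / m)) ^ m = (a i : ℝ) := by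
      rw [← Real.rpow_natCast (((a i : ℝ)) ^ ((1 : ℝ) / m)) m,
        ← Real.rpow_mul (hapos i).le, one_div, inv_mul_cancel₀ hmR, Real.rpow_one]
    rw [hβ]
    simp only []
    rw [inv_pow, h1]
    push_cast
    rfl
  have hrat := all_rational_of_sum_rational hm0 β hpos (fun i => (a i : ℚ)⁻¹) hqm heq
  -- each a i is an m-th power of an integer t i with 1 ≤ t i ≤ k and β i = 1/t i
  have key : ∀ i, ∃ t : ℕ, t ^ m = a i ∧ 1 ≤ t ∧ t ≤ k ∧ β i = 1 / (t : ℝ) := by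
    intro i
    obtain ⟨r, hr⟩ := hrat i
    have hrpos : (0 : ℚ) < r := by
      have := hpos i; rw [hr] at this; exact_mod_cast this
    set s : ℚ := r⁻¹ with hs
    have hspos : 0 < s := inv_pos.mpr hrpos
    have hsm : s ^ m = (a i : ℚ) := by
      have h1 : (r : ℝ) ^ m = (((a i : ℚ)⁻¹ : ℚ) : ℝ) := by rw [← hr]; exact hqm i
      have h2 : r ^ m = (a i : ℚ)⁻¹ := by exact_mod_cast h1
      rw [hs, inv_pow, h2, inv_inv]
    have hden : s.den = 1 := by
      have h3 : s.den ^ m = 1 := by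
        have h4 : (s ^ m).den = 1 := by rw [hsm]; exact Rat.den_natCast _
        rwa [Rat.den_pow] at h4
      exact (pow_eq_one_iff_left hm0).mp h3
    have hnum : ((s.num : ℚ)) = s := by
      conv_rhs => rw [← Rat.num_div_den s]
      rw [hden]
      simp
    have hnumpos : 0 < s.num := Rat.num_pos.mpr hspos
    have h5 : ((s.num.toNat : ℚ)) = s := by
      rw [← hnum]
      norm_cast
      omega
    refine ⟨s.num.toNat, ?_, by omega, ?_, ?_⟩
    · -- t ^ m = a i
      have h6 : ((s.num.toNat : ℚ)) ^ m = ((a i : ℕ) : ℚ) := by rw [h5, hsm]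
      exact_mod_cast h6
    · -- t ≤ k
      have htm : s.num.toNat ^ m = a i := by
        have h6 : ((s.num.toNat : ℚ)) ^ m = ((a i : ℕ) : ℚ) := by rw [h5, hsm]
        exact_mod_cast h6
      have h7 : s.num.toNat ^ m < (k + 1) ^ m := by
        have := (ha i).2
        have hp : 1 ≤ (k + 1) ^ m := Nat.one_le_pow _ _ (by omega)
        omega
      have := (Nat.pow_lt_pow_iff_left hm0).mp h7
      omega
    · -- β i = 1 / t
      have h8 : r = ((s.num.toNat : ℚ))⁻¹ := by rw [h5, hs, inv_inv]
      rw [hr, h8, one_div]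
      push_cast
      rfl
  choose t ht1 ht2 ht3 ht4 using key
  have hsum' : ∑ i, (1 : ℝ) / (t i) = 1 := by
    have h9 : ∑ i, (1 : ℝ) / (t i) = ∑ i, β i :=
      Finset.sum_congr rfl (fun i _ => (ht4 i).symm)
    rw [h9, heq]
  have hall : ∀ i, t i = k := by
    by_contra hc
    push_neg at hc
    obtain ⟨j, hj⟩ := hc
    have hjk : t j < k := lt_of_le_of_ne (ht3 j) hj
    have hlt : ∑ _i : Fin k, (1 : ℝ) / (k : ℝ) < ∑ i, (1 : ℝ) / (t i) := by
      apply Finset.sum_lt_sum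
      · intro i _
        apply one_div_le_one_div_of_le
        · exact_mod_cast Nat.cast_pos.mpr (ht2 i)
        · exact_mod_cast ht3 i
      · refine ⟨j, Finset.mem_univ j, ?_⟩
        apply one_div_lt_one_div_of_lt
        · exact_mod_cast Nat.cast_pos.mpr (ht2 j)
        · exact_mod_cast hjk
    rw [hsum'] at hlt
    have hone : ∑ _i : Fin k, (1 : ℝ) / (k : ℝ) = 1 := by
      rw [Finset.sum_const, Finset.card_univ, Fintype.card_fin, nsmul_eq_mul]
      field_simp
    rw [hone] at hlt
    exact lt_irrefl _ hlt
  intro i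
  rw [← ht1 i, hall i]
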